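/- Let r¹, r², r³ be sequences of non-negative rationals. Then there exist a strictly increasing function h : ω → ω, a finite family F of strictly monotone rational sequences such that F ∪ {the constant sequence 1} is linearly independent in ℚ^ω, non-negative rationals k₁, k₂, k₃, and rationals a_f, b_f, c_f (f ∈ F), such that for all n: (r¹∘h)(n) = k₁ + Σ_{f∈F} a_f·f(n), (r²∘h)(n) = k₂ + Σ_{f∈F} b_f·f(n), and (r³∘h)(n) = k₃ + Σ_{f∈F} c_f·f(n). -/

import Mathlib

open Submodule

private lemma subseq_lemma (r : ℕ → ℚ) :
    ∃ φ : ℕ → ℕ, StrictMono φ ∧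
      (StrictMono (r ∘ φ) ∨ StrictAnti (r ∘ φ) ∨ ∃ c, ∀ n, r (φ n) = c) := by
  haveI : IsTrans ℚ (· < ·) := ⟨fun _ _ _ => lt_trans⟩
  haveI : IsTrans ℚ (· > ·) := ⟨fun _ _ _ h1 h2 => lt_trans h2 h1⟩
  obtain ⟨g, hg | hg⟩ := exists_increasing_or_nonincreasing_subseq (· < ·) r
  · exact ⟨g, g.strictMono, Or.inl (strictMono_nat_of_lt_succ fun n =>
      hg n (n + 1) (Nat.lt_succ_self n))⟩
  · obtain ⟨g₂, hg₂ | hg₂⟩ := exists_increasing_or_nonincreasing_subseq (· > ·) (r ∘ g)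
    · exact ⟨fun n => g (g₂ n), g.strictMono.comp g₂.strictMono, Or.inr (Or.inl
        (strictAnti_nat_of_succ_lt fun n => hg₂ n (n + 1) (Nat.lt_succ_self n)))⟩
    · refine ⟨fun n => g (g₂ n), g.strictMono.comp g₂.strictMono,
        Or.inr (Or.inr ⟨r (g (g₂ 0)), ?_⟩)⟩
      intro n
      rcases Nat.eq_zero_or_pos n with h | h
      · rw [h]
      · have h1 : ¬ r (g (g₂ 0)) < r (g (g₂ n)) := hg (g₂ 0) (g₂ n) (g₂.strictMono h)
        have h2 : ¬ r (g (g₂ 0)) > r (g (g₂ n)) := hg₂ 0 n h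
        exact le_antisymm (not_lt.1 h1) (not_lt.1 h2)

private lemma comp_pres {g : ℕ → ℚ} {ψ : ℕ → ℕ} (hψ : StrictMono ψ)
    (H : StrictMono g ∨ StrictAnti g ∨ ∃ c, ∀ n, g n = c) :
    StrictMono (g ∘ ψ) ∨ StrictAnti (g ∘ ψ) ∨ ∃ c, ∀ n, (g ∘ ψ) n = c := by
  rcases H with H | H | ⟨c, H⟩
  · exact Or.inl (H.comp hψ)
  · exact Or.inr (Or.inl (H.comp_strictMono hψ))
  · exact Or.inr (Or.inr ⟨c, fun n => H _⟩)

private lemma main_part (g₁ g₂ g₃ : ℕ → ℚ)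
    (h₁ : ∀ n, 0 ≤ g₁ n) (h₂ : ∀ n, 0 ≤ g₂ n) (h₃ : ∀ n, 0 ≤ g₃ n)
    (H₁ : StrictMono g₁ ∨ StrictAnti g₁ ∨ ∃ c, ∀ n, g₁ n = c)
    (H₂ : StrictMono g₂ ∨ StrictAnti g₂ ∨ ∃ c, ∀ n, g₂ n = c)
    (H₃ : StrictMono g₃ ∨ StrictAnti g₃ ∨ ∃ c, ∀ n, g₃ n = c) :
    ∃ F : Finset (ℕ → ℚ),
      (∀ f ∈ F, StrictMono f ∨ StrictAnti f) ∧
      LinearIndependent ℚ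
        (fun g : (insert (fun _ => (1 : ℚ)) (F : Set (ℕ → ℚ)) : Set (ℕ → ℚ)) =>
          (g : ℕ → ℚ)) ∧
      ∃ (k₁ k₂ k₃ : ℚ), 0 ≤ k₁ ∧ 0 ≤ k₂ ∧ 0 ≤ k₃ ∧
      ∃ (a b c : (ℕ → ℚ) → ℚ), ∀ n : ℕ,
        g₁ n = k₁ + ∑ f ∈ F, a f * f n ∧
        g₂ n = k₂ + ∑ f ∈ F, b f * f n ∧
        g₃ n = k₃ + ∑ f ∈ F, c f * f n := by
  classical
  set one : ℕ → ℚ := fun _ => (1 : ℚ) with hone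
  set f₁ : ℕ → ℚ := fun n => g₁ n - g₁ 0 with hf₁
  set f₂ : ℕ → ℚ := fun n => g₂ n - g₂ 0 with hf₂
  set f₃ : ℕ → ℚ := fun n => g₃ n - g₃ 0 with hf₃
  set s : Set (ℕ → ℚ) := insert one {f₁, f₂, f₃} with hs
  obtain ⟨b, hbs, hspan, hind⟩ := exists_linearIndependent ℚ s
  have hvan : ∀ f ∈ ({f₁, f₂, f₃} : Set (ℕ → ℚ)), f 0 = 0 := by
    rintro f (rfl | rfl | rfl) <;> simp [hf₁, hf₂, hf₃]
  have honeb : one ∈ b := by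
    by_contra hob
    have hb0 : b ⊆ {f₁, f₂, f₃} := fun x hx =>
      ((hbs hx).resolve_left (fun h => hob (h ▸ hx)))
    have hone_mem : one ∈ span ℚ b := by
      rw [hspan]; exact subset_span (Set.mem_insert _ _)
    have hker : span ℚ b ≤ LinearMap.ker (LinearMap.proj (R := ℚ) (φ := fun _ : ℕ => ℚ) 0) := by
      rw [span_le]
      intro x hx
      simpa using hvan x (hb0 hx)
    have := hker hone_mem
    simp [hone] at this
  have hsfin : s.Finite :=
    (((Set.finite_singleton f₃).insert f₂).insert f₁).insert one
  have hbfin : b.Finite := hsfin.subset hbs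
  set F : Finset (ℕ → ℚ) := hbfin.toFinset.erase one with hF
  have honeF : one ∉ F := Finset.notMem_erase _ _
  have hFcoe : (F : Set (ℕ → ℚ)) = b \ {one} := by
    simp [hF, Finset.coe_erase, hbfin.coe_toFinset]
  have hFb : ∀ f ∈ F, f ∈ b := by
    intro f hf
    have h' : f ∈ b \ {one} := by rw [← hFcoe]; exact hf
    exact h'.1
  have hFsub : ∀ f ∈ F, f ∈ ({f₁, f₂, f₃} : Set (ℕ → ℚ)) := by
    intro f hf
    have h' : f ∈ b \ {one} := by rw [← hFcoe]; exact hf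
    exact (hbs h'.1).resolve_left h'.2
  have hset : (insert one (F : Set (ℕ → ℚ)) : Set (ℕ → ℚ)) = b := by
    rw [hFcoe, Set.insert_diff_singleton, Set.insert_eq_self.2 honeb]
  -- no zero vector in b
  have hne0 : ∀ f ∈ b, f ≠ 0 := by
    intro f hf hf0
    exact (hind.ne_zero ⟨f, hf⟩) (by ext n; simp [hf0])
  -- monotonicity of members of F
  have hmono : ∀ f ∈ F, StrictMono f ∨ StrictAnti f := by
    intro f hf
    have key : ∀ (g : ℕ → ℚ), (StrictMono g ∨ StrictAnti g ∨ ∃ c, ∀ n, g n = c) →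
        f = (fun n => g n - g 0) → StrictMono f ∨ StrictAnti f := by
      rintro g (H | H | ⟨c, H⟩) rfl
      · exact Or.inl fun m n hmn => by simpa using sub_lt_sub_right (H hmn) (g 0)
      · exact Or.inr fun m n hmn => by simpa using sub_lt_sub_right (H hmn) (g 0)
      · exfalso
        exact hne0 _ (hFb _ hf) (by ext n; simp [H n, H 0])
    rcases hFsub f hf with h | h | h
    · exact key g₁ H₁ h
    · exact key g₂ H₂ h
    · exact key g₃ H₃ h
  refine ⟨F, hmono, ?_, ?_⟩
  · rw [show (insert (fun _ => (1 : ℚ)) (F : Set (ℕ → ℚ)) : Set (ℕ → ℚ)) = b from hset]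
    exact hind
  -- coefficients
  have hcoeF : (↑(insert one F) : Set (ℕ → ℚ)) = b := by
    rw [Finset.coe_insert, hset]
  have rep : ∀ (g : ℕ → ℚ), (∀ n, 0 ≤ g n) → (g = fun n => g 0 + (g n - g 0)) →
      (fun n => g n - g 0) ∈ ({f₁, f₂, f₃} : Set (ℕ → ℚ)) →
      ∃ k : ℚ, 0 ≤ k ∧ ∃ w : (ℕ → ℚ) → ℚ, ∀ n, g n = k + ∑ f ∈ F, w f * f n := by
    intro g hg hgrep hgf
    have hmem : g ∈ span ℚ (↑(insert one F) : Set (ℕ → ℚ)) := by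
      rw [hcoeF, hspan]
      have h1 : one ∈ span ℚ s := subset_span (Set.mem_insert _ _)
      have h2 : (fun n => g n - g 0) ∈ span ℚ s := subset_span (Set.mem_insert_of_mem _ hgf)
      have : g = g 0 • one + fun n => g n - g 0 := by
        ext n; simp [hone]
      rw [this]
      exact add_mem (smul_mem _ _ h1) h2
    rw [mem_span_finset] at hmem
    obtain ⟨w, -, hw⟩ := hmem
    rw [Finset.sum_insert honeF] at hw
    have hw0 := congrFun hw 0
    simp only [Pi.add_apply, Pi.smul_apply, Finset.sum_apply, smul_eq_mul, hone] at hw0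
    have hsum0 : ∑ f ∈ F, w f * f 0 = 0 := by
      apply Finset.sum_eq_zero
      intro f hf
      rw [hvan f (hFsub f hf), mul_zero]
    rw [hsum0, mul_one, add_zero] at hw0
    refine ⟨w one, hw0 ▸ hg 0, w, fun n => ?_⟩
    have hwn := congrFun hw n
    simp only [Pi.add_apply, Pi.smul_apply, Finset.sum_apply, smul_eq_mul, hone, mul_one] at hwn
    linarith [hwn]
  obtain ⟨k₁, hk₁, w₁, hw₁⟩ := rep g₁ h₁ (by ext n; ring) (Set.mem_insert _ _)
  obtain ⟨k₂, hk₂, w₂, hw₂⟩ := rep g₂ h₂ (by ext n; ring)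
    (Set.mem_insert_of_mem _ (Set.mem_insert _ _))
  obtain ⟨k₃, hk₃, w₃, hw₃⟩ := rep g₃ h₃ (by ext n; ring)
    (Set.mem_insert_of_mem _ (Set.mem_insert_of_mem _ rfl))
  exact ⟨k₁, k₂, k₃, hk₁, hk₂, hk₃, w₁, w₂, w₃, fun n => ⟨hw₁ n, hw₂ n, hw₃ n⟩⟩

/-- Given three sequences of non-negative rationals, after passing to a common
subsequence they become non-negative-constant-plus-rational-combinations of a finite
family F of strictly monotone sequences with F ∪ {1⃗} linearly independent in ℚ^ω. -/
theorem stmt_7 (r₁ r₂ r₃ : ℕ → ℚ)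
    (h₁ : ∀ n, 0 ≤ r₁ n) (h₂ : ∀ n, 0 ≤ r₂ n) (h₃ : ∀ n, 0 ≤ r₃ n) :
    ∃ (h : ℕ → ℕ), StrictMono h ∧
    ∃ F : Finset (ℕ → ℚ),
      (∀ f ∈ F, StrictMono f ∨ StrictAnti f) ∧
      LinearIndependent ℚ
        (fun g : (insert (fun _ => (1 : ℚ)) (F : Set (ℕ → ℚ)) : Set (ℕ → ℚ)) =>
          (g : ℕ → ℚ)) ∧
      ∃ (k₁ k₂ k₃ : ℚ), 0 ≤ k₁ ∧ 0 ≤ k₂ ∧ 0 ≤ k₃ ∧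
      ∃ (a b c : (ℕ → ℚ) → ℚ), ∀ n : ℕ,
        r₁ (h n) = k₁ + ∑ f ∈ F, a f * f n ∧
        r₂ (h n) = k₂ + ∑ f ∈ F, b f * f n ∧
        r₃ (h n) = k₃ + ∑ f ∈ F, c f * f n := by
  obtain ⟨φ₁, hφ₁, H₁⟩ := subseq_lemma r₁
  obtain ⟨φ₂, hφ₂, H₂⟩ := subseq_lemma (r₂ ∘ φ₁)
  obtain ⟨φ₃, hφ₃, H₃⟩ := subseq_lemma ((r₃ ∘ φ₁) ∘ φ₂)
  have G₁ := comp_pres hφ₃ (comp_pres hφ₂ H₁)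
  have G₂ := comp_pres hφ₃ H₂
  have G₃ := H₃
  obtain ⟨F, hF1, hF2, hrest⟩ := main_part (((r₁ ∘ φ₁) ∘ φ₂) ∘ φ₃) (((r₂ ∘ φ₁) ∘ φ₂) ∘ φ₃)
    (((r₃ ∘ φ₁) ∘ φ₂) ∘ φ₃) (fun n => h₁ _) (fun n => h₂ _) (fun n => h₃ _)
    (by exact G₁) (by exact G₂) G₃
  exact ⟨fun n => φ₁ (φ₂ (φ₃ n)), (hφ₁.comp hφ₂).comp hφ₃, F, hF1, hF2, hrest⟩
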